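/- Let S be a set, Σ a non-principal ultrafilter on S, {F_i}_{i ∈ S} a family of fields, and F = ∏_{i ∈ S} F_i / Σ the ultraproduct field. Then there is a field embedding of the algebraic closure F̄ of F into the ultraproduct ∏_{i ∈ S} F̄_i / Σ of the algebraic closures F̄_i of the F_i, extending the natural embedding F → ∏_{i ∈ S} F̄_i / Σ induced by the inclusions F_i ⊆ F̄_i. -/

import Mathlib

/-- The ideal of the product ring `∀ i, R i` consisting of families vanishing on a set of
indices belonging to the ultrafilter `U`.  The quotient by this ideal is the ultraproduct
`∏_{i ∈ S} R_i / U`. -/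
def ultraIdeal {S : Type*} (U : Ultrafilter S) (R : S → Type*) [∀ i, CommRing (R i)] :
    Ideal (∀ i, R i) where
  carrier := {a | {i | a i = 0} ∈ U}
  add_mem' {a b} ha hb := by
    refine U.toFilter.mem_of_superset (Filter.inter_mem ha hb) ?_
    intro i hi
    simp only [Set.mem_inter_iff, Set.mem_setOf_eq] at hi ⊢
    rw [Pi.add_apply, hi.1, hi.2, add_zero]
  zero_mem' := by
    simp only [Set.mem_setOf_eq, Pi.zero_apply]
    exact Filter.univ_mem' fun i => trivial
  smul_mem' c a ha := by
    refine U.toFilter.mem_of_superset ha ?_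
    intro i hi
    simp only [Set.mem_setOf_eq] at hi ⊢
    show c i * a i = 0
    rw [hi, mul_zero]

/-- The ultraproduct of fields is a field. -/
theorem ultra_isField {S : Type*} (U : Ultrafilter S) (F : S → Type*) [∀ i, Field (F i)] :
    IsField ((∀ i, F i) ⧸ ultraIdeal U F) := by
  refine ⟨⟨0, 1, ?_⟩, mul_comm, ?_⟩
  · intro h
    have h1 : (1 : ∀ i, F i) ∈ ultraIdeal U F := by
      rw [← Ideal.Quotient.eq_zero_iff_mem, map_one, ← h]
    have : ({i | (1 : ∀ i, F i) i = 0} : Set S) = ∅ := by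
      ext i; simp [one_ne_zero]
    have h2 : ({i | (1 : ∀ i, F i) i = 0} : Set S) ∈ U := h1
    rw [this] at h2
    exact Filter.empty_notMem (U : Filter S) h2
  · rintro a ha
    obtain ⟨a, rfl⟩ := Ideal.Quotient.mk_surjective a
    have hmem : a ∉ ultraIdeal U F := fun h => ha (Ideal.Quotient.eq_zero_iff_mem.mpr h)
    have hc : {i | a i = 0}ᶜ ∈ U := (Ultrafilter.compl_mem_iff_notMem).mpr hmem
    refine ⟨Ideal.Quotient.mk _ (fun i => (a i)⁻¹), ?_⟩
    rw [← map_mul, ← map_one (Ideal.Quotient.mk (ultraIdeal U F)), Ideal.Quotient.eq]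
    refine U.toFilter.mem_of_superset hc ?_
    intro i hi
    simp only [Set.mem_compl_iff, Set.mem_setOf_eq] at hi
    show a i * (a i)⁻¹ - 1 = 0
    rw [mul_inv_cancel₀ hi, sub_self]

/-- The field structure on the ultraproduct of fields. -/
noncomputable instance ultraField {S : Type*} (U : Ultrafilter S) (F : S → Type*)
    [∀ i, Field (F i)] : Field ((∀ i, F i) ⧸ ultraIdeal U F) :=
  (ultra_isField U F).toField

/-- The natural ring homomorphism from the ultraproduct of the fields `F i` to the
ultraproduct of their algebraic closures, induced by the inclusions
`F i ⊆ AlgebraicClosure (F i)`. -/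
noncomputable def ultraMapToClosure {S : Type*} (U : Ultrafilter S) (F : S → Type*)
    [∀ i, Field (F i)] :
    ((∀ i, F i) ⧸ ultraIdeal U F) →+*
      ((∀ i, AlgebraicClosure (F i)) ⧸ ultraIdeal U fun i => AlgebraicClosure (F i)) :=
  Ideal.Quotient.lift (ultraIdeal U F)
    ((Ideal.Quotient.mk (ultraIdeal U fun i => AlgebraicClosure (F i))).comp
      (Pi.ringHom fun i =>
        (algebraMap (F i) (AlgebraicClosure (F i))).comp (Pi.evalRingHom F i)))
    (by
      intro a ha
      rw [RingHom.comp_apply, Ideal.Quotient.eq_zero_iff_mem]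
      refine U.toFilter.mem_of_superset ha ?_
      intro i hi
      simp only [Set.mem_setOf_eq] at hi ⊢
      show algebraMap (F i) (AlgebraicClosure (F i)) (a i) = 0
      rw [hi, map_zero])

/-- An ultraproduct of algebraically closed fields is algebraically closed. -/
theorem ultra_isAlgClosed {S : Type*} (U : Ultrafilter S) (K : S → Type*)
    [∀ i, Field (K i)] [∀ i, IsAlgClosed (K i)] :
    IsAlgClosed ((∀ i, K i) ⧸ ultraIdeal U K) := by
  apply IsAlgClosed.of_exists_root
  intro p hmonic hirr
  set Qt := (∀ i, K i) ⧸ ultraIdeal U K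
  set n := p.natDegree with hn
  have hn1 : 1 ≤ n := hirr.natDegree_pos
  -- lift p to a polynomial over the product ring
  obtain ⟨P, hP⟩ := Polynomial.map_surjective (Ideal.Quotient.mk (ultraIdeal U K))
    Ideal.Quotient.mk_surjective p
  have hcoeff : Ideal.Quotient.mk (ultraIdeal U K) (P.coeff n) = 1 := by
    have := congrArg (fun q => Polynomial.coeff q n) hP
    simpa [Polynomial.coeff_map, hn, hmonic.coeff_natDegree] using this
  have hA : {i | P.coeff n i = 1} ∈ U := by
    have hm : P.coeff n - 1 ∈ ultraIdeal U K :=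
      Ideal.Quotient.eq.mp (hcoeff.trans (map_one (Ideal.Quotient.mk (ultraIdeal U K))).symm)
    refine U.toFilter.mem_of_superset hm ?_
    intro i hi
    simp only [Set.mem_setOf_eq] at hi ⊢
    have h' : P.coeff n i - 1 = 0 := hi
    exact sub_eq_zero.mp h'
  -- choose roots componentwise
  classical
  let r : ∀ i, K i := fun i =>
    if h : ∃ x, (P.map (Pi.evalRingHom K i)).eval x = 0 then h.choose else 0
  refine ⟨Ideal.Quotient.mk _ r, ?_⟩
  have key : {i | (P.eval r) i = 0} ∈ U := by
    refine U.toFilter.mem_of_superset hA ?_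
    intro i hi
    simp only [Set.mem_setOf_eq] at hi ⊢
    have hPi : (P.map (Pi.evalRingHom K i)).coeff n ≠ 0 := by
      rw [Polynomial.coeff_map]
      show P.coeff n i ≠ 0
      rw [hi]; exact one_ne_zero
    have hdeg : (P.map (Pi.evalRingHom K i)).degree ≠ 0 := by
      have h1 : n ≤ (P.map (Pi.evalRingHom K i)).natDegree :=
        Polynomial.le_natDegree_of_ne_zero hPi
      exact (Polynomial.natDegree_pos_iff_degree_pos.mp (by omega)).ne'
    have hex : ∃ x, (P.map (Pi.evalRingHom K i)).eval x = 0 :=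
      IsAlgClosed.exists_root _ hdeg
    have hr : (P.map (Pi.evalRingHom K i)).eval (r i) = 0 := by
      simp only [r, dif_pos hex]
      exact hex.choose_spec
    calc (P.eval r) i = Pi.evalRingHom K i (P.eval r) := rfl
      _ = (P.map (Pi.evalRingHom K i)).eval (r i) := by
          rw [Polynomial.eval_map]
          exact (Polynomial.eval₂_hom (Pi.evalRingHom K i) r).symm
      _ = 0 := hr
  calc p.eval (Ideal.Quotient.mk _ r)
      = (P.map (Ideal.Quotient.mk (ultraIdeal U K))).eval (Ideal.Quotient.mk _ r) := by
        rw [hP]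
    _ = Ideal.Quotient.mk _ (P.eval r) := by
        rw [Polynomial.eval_map]
        exact Polynomial.eval₂_hom (Ideal.Quotient.mk (ultraIdeal U K)) r
    _ = 0 := Ideal.Quotient.eq_zero_iff_mem.mpr key

set_option maxHeartbeats 1000000 in
set_option synthInstance.maxHeartbeats 400000 in
/-- The algebraic closure of the ultraproduct `F = ∏ F_i / U` of fields embeds into the
ultraproduct `∏ F̄_i / U` of the algebraic closures, extending the natural embedding
`F → ∏ F̄_i / U`. -/
theorem algebraicClosure_embeds_ultraproduct {S : Type*} (U : Ultrafilter S)
    (hU : ∀ s : Set S, s.Finite → s ∉ U) (F : S → Type*) [∀ i, Field (F i)] :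
    ∃ ψ : AlgebraicClosure ((∀ i, F i) ⧸ ultraIdeal U F) →+*
        ((∀ i, AlgebraicClosure (F i)) ⧸ ultraIdeal U fun i => AlgebraicClosure (F i)),
      ∀ x : (∀ i, F i) ⧸ ultraIdeal U F,
        ψ (algebraMap ((∀ i, F i) ⧸ ultraIdeal U F)
            (AlgebraicClosure ((∀ i, F i) ⧸ ultraIdeal U F)) x) =
          ultraMapToClosure U F x := by
  letI : IsAlgClosed ((∀ i, AlgebraicClosure (F i)) ⧸ ultraIdeal U fun i => AlgebraicClosure (F i)) :=
    ultra_isAlgClosed U fun i => AlgebraicClosure (F i)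
  letI : Algebra ((∀ i, F i) ⧸ ultraIdeal U F)
      ((∀ i, AlgebraicClosure (F i)) ⧸ ultraIdeal U fun i => AlgebraicClosure (F i)) :=
    (ultraMapToClosure U F).toAlgebra
  letI : Module.IsTorsionFree ((∀ i, F i) ⧸ ultraIdeal U F)
      ((∀ i, AlgebraicClosure (F i)) ⧸ ultraIdeal U fun i => AlgebraicClosure (F i)) :=
    Module.isTorsionFree_iff_algebraMap_injective.mpr (ultraMapToClosure U F).injective
  exact ⟨(IsAlgClosed.lift (R := (∀ i, F i) ⧸ ultraIdeal U F)).toRingHom,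
    fun x => (IsAlgClosed.lift (R := (∀ i, F i) ⧸ ultraIdeal U F)).commutes x⟩
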